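/- Let d ∈ ℕ, L, T ∈ [0,∞), δ ∈ (0,∞), p ∈ [2,∞), let μ : ℝ^d → ℝ^d be globally Lipschitz with constant L (with respect to the Euclidean norm), let X, Y : [0,T] → ℝ^d be continuous functions, let a : [0,T] → ℝ^d be Borel measurable with ∫_0^t ‖a_s‖ ds < ∞ for all t ∈ [0,T], and assume that for all t ∈ [0,T] it holds that X_t − Y_t = X_0 − Y_0 + ∫_0^t [μ(X_s) − a_s] ds. Then for all t ∈ [0,T], ‖X_t − Y_t‖^p ≤ exp((L + (1 − 1/p)/δ) p t) (‖X_0 − Y_0‖^p + δ^(p−1) ∫_0^t ‖a_s − μ(Y_s)‖^p ds). -/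

import Mathlib

open MeasureTheory
open scoped ENNReal NNReal

open Set in
private lemma weighted_rpow_aux {p u v w1 w2 : ℝ} (hp : 1 ≤ p) (hu : 0 ≤ u) (hv : 0 ≤ v)
    (h1 : 0 < w1) (h2 : 0 < w2) (hw : w1 + w2 = 1) :
    (u + v) ^ p ≤ w1 ^ (1 - p) * u ^ p + w2 ^ (1 - p) * v ^ p := by
  have hc := (convexOn_rpow hp).2 (Set.mem_Ici.2 (div_nonneg hu h1.le))
    (Set.mem_Ici.2 (div_nonneg hv h2.le)) h1.le h2.le hw
  simp only [smul_eq_mul] at hc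
  rw [mul_div_cancel₀ _ h1.ne', mul_div_cancel₀ _ h2.ne'] at hc
  refine hc.trans_eq ?_
  rw [Real.div_rpow hu h1.le, Real.div_rpow hv h2.le]
  have e1 : w1 ^ (1 - p) = w1 / w1 ^ p := by rw [Real.rpow_sub h1, Real.rpow_one]
  have e2 : w2 ^ (1 - p) = w2 / w2 ^ p := by rw [Real.rpow_sub h2, Real.rpow_one]
  rw [e1, e2]; ring

private lemma final_real_aux {L t δ p A B Jr N : ℝ} (hL : 0 ≤ L) (ht : 0 < t) (hδ : 0 < δ)
    (hp : 2 ≤ p) (hA : 0 ≤ A) (hB : 0 ≤ B) (hJr : 0 ≤ Jr)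
    (hBle : B ≤ t ^ (1 - 1/p) * Jr ^ (1/p)) (hN : 0 ≤ N)
    (hE : N ≤ (A + B) * Real.exp (L * t)) :
    N ^ p ≤ Real.exp ((L + (1 - 1/p)/δ) * p * t) * (A ^ p + δ ^ (p-1) * Jr) := by
  have hp1 : (1:ℝ) < p := lt_of_lt_of_le one_lt_two hp
  have hp0 : (0:ℝ) < p := lt_trans one_pos hp1
  have hδt : (0:ℝ) < δ + t := by linarith
  have w1pos : (0:ℝ) < δ / (δ + t) := by positivity
  have w2pos : (0:ℝ) < t / (δ + t) := by positivity
  have hw : δ / (δ + t) + t / (δ + t) = 1 := by field_simp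
  have step1 : N ^ p ≤ ((A + B) * Real.exp (L * t)) ^ p :=
    Real.rpow_le_rpow hN hE hp0.le
  have step2 : ((A + B) * Real.exp (L * t)) ^ p = (A + B) ^ p * Real.exp (L * t * p) := by
    rw [Real.mul_rpow (by positivity) (Real.exp_pos _).le, ← Real.exp_mul]
  have conv := weighted_rpow_aux hp1.le hA hB w1pos w2pos hw
  have einv : ∀ x : ℝ, 0 < x → x ^ (1 - p) = (x⁻¹) ^ (p - 1) := by
    intro x hx
    rw [Real.inv_rpow hx.le, ← Real.rpow_neg hx.le, neg_sub]
  have e1 : (δ / (δ + t)) ^ (1 - p) = ((δ + t)/δ) ^ (p - 1) := by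
    rw [einv _ w1pos, inv_div]
  have e2 : (t / (δ + t)) ^ (1 - p) = ((δ + t)/t) ^ (p - 1) := by
    rw [einv _ w2pos, inv_div]
  rw [e1, e2] at conv
  set E1 := Real.exp (t / δ * (p - 1)) with hE1
  have hexp : (1:ℝ) + t/δ ≤ Real.exp (t/δ) := by
    have := Real.add_one_le_exp (t/δ); linarith
  have b1 : ((δ + t)/δ) ^ (p - 1) ≤ E1 := by
    have : (δ + t)/δ = 1 + t/δ := by field_simp
    rw [this, hE1, Real.exp_mul]
    exact Real.rpow_le_rpow (by positivity) hexp (by linarith)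
  have bBp : B ^ p ≤ t ^ (p - 1) * Jr := by
    have h1 : B ^ p ≤ (t ^ (1 - 1/p) * Jr ^ (1/p)) ^ p :=
      Real.rpow_le_rpow hB hBle hp0.le
    refine h1.trans_eq ?_
    rw [Real.mul_rpow (by positivity) (by positivity), ← Real.rpow_mul ht.le,
      ← Real.rpow_mul hJr]
    have ep1 : (1 - 1/p) * p = p - 1 := by field_simp
    have ep2 : (1/p) * p = 1 := by field_simp
    rw [ep1, ep2, Real.rpow_one]
  have b2 : ((δ + t)/t) ^ (p - 1) * B ^ p ≤ δ ^ (p - 1) * E1 * Jr := by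
    calc ((δ + t)/t) ^ (p - 1) * B ^ p
        ≤ ((δ + t)/t) ^ (p - 1) * (t ^ (p - 1) * Jr) :=
          mul_le_mul_of_nonneg_left bBp (Real.rpow_nonneg (by positivity) _)
      _ = (δ + t) ^ (p - 1) * Jr := by
          rw [← mul_assoc, ← Real.mul_rpow (by positivity) ht.le,
            div_mul_cancel₀ _ ht.ne']
      _ ≤ (δ * Real.exp (t/δ)) ^ (p - 1) * Jr := by
          refine mul_le_mul_of_nonneg_right
            (Real.rpow_le_rpow hδt.le ?_ (by linarith)) hJr
          have h' : δ * (1 + t/δ) ≤ δ * Real.exp (t/δ) :=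
            mul_le_mul_of_nonneg_left hexp hδ.le
          calc δ + t = δ * (1 + t/δ) := by field_simp
            _ ≤ _ := h'
      _ = δ ^ (p - 1) * E1 * Jr := by
          rw [Real.mul_rpow hδ.le (Real.exp_pos _).le, hE1, ← Real.exp_mul]
  have convfinal : (A + B) ^ p ≤ E1 * (A ^ p + δ ^ (p - 1) * Jr) := by
    have hApnn : 0 ≤ A ^ p := Real.rpow_nonneg hA p
    calc (A + B) ^ p ≤ ((δ + t)/δ) ^ (p - 1) * A ^ p + ((δ + t)/t) ^ (p - 1) * B ^ p := conv
      _ ≤ E1 * A ^ p + δ ^ (p - 1) * E1 * Jr :=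
          add_le_add (mul_le_mul_of_nonneg_right b1 hApnn) b2
      _ = E1 * (A ^ p + δ ^ (p - 1) * Jr) := by ring
  calc N ^ p ≤ (A + B) ^ p * Real.exp (L * t * p) := step1.trans_eq step2
    _ ≤ (E1 * (A ^ p + δ ^ (p - 1) * Jr)) * Real.exp (L * t * p) :=
        mul_le_mul_of_nonneg_right convfinal (Real.exp_pos _).le
    _ = Real.exp (L * t * p + t/δ * (p - 1)) * (A ^ p + δ ^ (p - 1) * Jr) := by
        rw [Real.exp_add, hE1]; ring
    _ = Real.exp ((L + (1 - 1/p)/δ) * p * t) * (A ^ p + δ ^ (p - 1) * Jr) := by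
        congr 1
        field_simp

open Set intervalIntegral in
private lemma gronwall_aux (L T : ℝ) (hL : 0 ≤ L)
    (h g : ℝ → ℝ)
    (hhc : ContinuousOn h (Icc 0 T))
    (hgnn : ∀ s, 0 ≤ g s)
    (hhnn : ∀ s, 0 ≤ h s)
    (hInt : ∀ u ∈ Icc (0:ℝ) T, IntervalIntegrable h volume 0 u)
    (hgInt : ∀ u ∈ Icc (0:ℝ) T, IntervalIntegrable g volume 0 u)
    (hbnd : ∀ u ∈ Icc (0:ℝ) T,
      h u ≤ h 0 + (∫ s in (0:ℝ)..u, g s) + L * ∫ s in (0:ℝ)..u, h s) :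
    ∀ t ∈ Set.Icc (0:ℝ) T, h t ≤
      (h 0 + ∫ s in (0:ℝ)..t, g s) * Real.exp (L * t) := by
  intro t0 ht0
  set C := h 0 + ∫ s in (0:ℝ)..t0, g s with hC
  set F : ℝ → ℝ := fun u => ∫ s in (0:ℝ)..u, h s with hF
  have huIcc : uIcc (0:ℝ) t0 = Icc 0 t0 := uIcc_of_le ht0.1
  have hFcont : ContinuousOn F (Icc 0 t0) := by
    have := intervalIntegral.continuousOn_primitive_interval (f := h) (a := 0) (b := t0)
      (μ := volume) ?_
    · rwa [huIcc] at this
    · rw [huIcc, ← intervalIntegrable_iff_integrableOn_Icc_of_le ht0.1]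
      exact hInt t0 ht0
  have hFderiv : ∀ u ∈ Ico (0:ℝ) t0, HasDerivWithinAt F (h u) (Ici u) u := by
    intro u hu
    have huT : u < T := lt_of_lt_of_le hu.2 ht0.2
    have huIccT : u ∈ Icc (0:ℝ) T := ⟨hu.1, huT.le⟩
    have hmemIco : Ico u T ∈ nhdsWithin u (Ici u) := Ico_mem_nhdsGE huT
    have hmemIoi : Ico u T ∈ nhdsWithin u (Ioi u) :=
      nhdsWithin_mono u Ioi_subset_Ici_self hmemIco
    refine intervalIntegral.integral_hasDerivWithinAt_right (hInt u huIccT)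
      (s := Ici u) (t := Ioi u) ⟨Ico u T, hmemIoi, ?_⟩ ?_
    · exact (hhc.mono (fun z hz => ⟨hu.1.trans hz.1, hz.2.le⟩)).aestronglyMeasurable
        measurableSet_Ico
    · exact (hhc u huIccT).mono_of_mem_nhdsWithin
        (Filter.mem_of_superset hmemIoi (fun z hz => ⟨hu.1.trans hz.1, hz.2.le⟩))
  have hFnonneg : ∀ u, 0 ≤ u → 0 ≤ F u := fun u hu =>
    intervalIntegral.integral_nonneg hu (fun s _ => hhnn s)
  have bound : ∀ u ∈ Icc (0:ℝ) t0, h u ≤ L * F u + C := by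
    intro u hu
    have huIccT : u ∈ Icc (0:ℝ) T := ⟨hu.1, hu.2.trans ht0.2⟩
    have h1 := hbnd u huIccT
    have h2 : (∫ s in (0:ℝ)..u, g s) ≤ ∫ s in (0:ℝ)..t0, g s :=
      intervalIntegral.integral_mono_interval le_rfl hu.1 hu.2
        (Filter.Eventually.of_forall fun s => hgnn s) (hgInt t0 ht0)
    rw [hC]; linarith
  have key := norm_le_gronwallBound_of_norm_deriv_right_le hFcont hFderiv (δ := 0)
    (by simp [hF]) (fun u hu => by
      rw [Real.norm_of_nonneg (hhnn u), Real.norm_of_nonneg (hFnonneg u hu.1)]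
      exact bound u ⟨hu.1, hu.2.le⟩) t0 ⟨ht0.1, le_rfl⟩
  rw [Real.norm_of_nonneg (hFnonneg t0 ht0.1), sub_zero] at key
  have hfinal : h t0 ≤ C + L * gronwallBound 0 L C t0 := by
    have := bound t0 ⟨ht0.1, le_rfl⟩
    nlinarith [key, hFnonneg t0 ht0.1]
  refine hfinal.trans ?_
  rcases eq_or_ne L 0 with hL0 | hL0
  · simp [hL0, gronwallBound_K0]
  · rw [gronwallBound_of_K_ne_0 hL0]
    have : C + L * (0 * Real.exp (L * t0) + C / L * (Real.exp (L * t0) - 1))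
        = C * Real.exp (L * t0) := by field_simp; ring
    rw [this]

/-- Deterministic pathwise perturbation estimate (Lemma 4.4): if `μ` is `L`-Lipschitz,
`X, Y` are continuous on `[0,T]`, `a` is measurable and integrable on each `[0,t]`, and
`X_t − Y_t = X_0 − Y_0 + ∫_0^t [μ(X_s) − a_s] ds` for all `t ∈ [0,T]`, then
`‖X_t − Y_t‖^p ≤ exp((L + (1 − 1/p)/δ) p t) (‖X_0 − Y_0‖^p + δ^(p−1) ∫_0^t ‖a_s − μ(Y_s)‖^p ds)`. -/
theorem pathwise_perturbation (d : ℕ) (L T : ℝ) (hL : 0 ≤ L) (hT : 0 ≤ T)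
    (δ : ℝ) (hδ : 0 < δ) (p : ℝ) (hp : 2 ≤ p)
    (μd : EuclideanSpace ℝ (Fin d) → EuclideanSpace ℝ (Fin d))
    (hμ : ∀ v w, ‖μd v - μd w‖ ≤ L * ‖v - w‖)
    (X Y : ℝ → EuclideanSpace ℝ (Fin d))
    (hX : ContinuousOn X (Set.Icc 0 T)) (hY : ContinuousOn Y (Set.Icc 0 T))
    (a : ℝ → EuclideanSpace ℝ (Fin d)) (ha : Measurable a)
    (haInt : ∀ t ∈ Set.Icc (0:ℝ) T, IntervalIntegrable a volume 0 t)
    (heq : ∀ t ∈ Set.Icc (0:ℝ) T,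
      X t - Y t = X 0 - Y 0 + ∫ s in (0:ℝ)..t, (μd (X s) - a s)) :
    ∀ t ∈ Set.Icc (0:ℝ) T,
      ENNReal.ofReal (‖X t - Y t‖ ^ p)
        ≤ ENNReal.ofReal (Real.exp ((L + (1 - 1 / p) / δ) * p * t)) *
          (ENNReal.ofReal (‖X 0 - Y 0‖ ^ p) +
            ENNReal.ofReal (δ ^ (p - 1)) *
              ∫⁻ s in Set.Ioc (0:ℝ) t, ENNReal.ofReal (‖a s - μd (Y s)‖ ^ p)) := by
  have hp1 : (1:ℝ) < p := lt_of_lt_of_le one_lt_two hp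
  have hp0 : (0:ℝ) < p := lt_trans one_pos hp1
  have hμc : Continuous μd := by
    have : LipschitzWith ⟨L, hL⟩ μd := by
      apply LipschitzWith.of_dist_le_mul
      intro x y
      rw [dist_eq_norm, dist_eq_norm]
      exact hμ x y
    exact this.continuous
  set h : ℝ → ℝ := fun s => ‖X s - Y s‖ with hh
  set g : ℝ → ℝ := fun s => ‖a s - μd (Y s)‖ with hg
  have hhc : ContinuousOn h (Set.Icc 0 T) := (hX.sub hY).norm
  have hsub : ∀ u : ℝ, u ∈ Set.Icc (0:ℝ) T → Set.uIcc (0:ℝ) u ⊆ Set.Icc 0 T := by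
    intro u hu
    rw [Set.uIcc_of_le hu.1]
    exact Set.Icc_subset_Icc le_rfl hu.2
  have hInt : ∀ u ∈ Set.Icc (0:ℝ) T, IntervalIntegrable h volume 0 u := fun u hu =>
    (hhc.mono (hsub u hu)).intervalIntegrable
  have hgInt : ∀ u ∈ Set.Icc (0:ℝ) T, IntervalIntegrable g volume 0 u := fun u hu =>
    (((haInt u hu).sub (((hμc.comp_continuousOn hY).mono (hsub u hu)).intervalIntegrable)).norm)
  have hfInt : ∀ u ∈ Set.Icc (0:ℝ) T, IntervalIntegrable (fun s => ‖μd (X s) - a s‖) volume 0 u :=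
    fun u hu =>
    ((((hμc.comp_continuousOn hX).mono (hsub u hu)).intervalIntegrable.sub (haInt u hu)).norm)
  have hbnd : ∀ u ∈ Set.Icc (0:ℝ) T,
      h u ≤ h 0 + (∫ s in (0:ℝ)..u, g s) + L * ∫ s in (0:ℝ)..u, h s := by
    intro u hu
    have e := heq u hu
    have h1 : h u ≤ h 0 + ‖∫ s in (0:ℝ)..u, (μd (X s) - a s)‖ := by
      rw [hh]; simp only
      rw [e]
      exact norm_add_le _ _
    refine h1.trans ?_
    rw [add_assoc]
    refine add_le_add le_rfl ?_
    refine (intervalIntegral.norm_integral_le_integral_norm hu.1).trans ?_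
    have mono : ∫ s in (0:ℝ)..u, ‖μd (X s) - a s‖ ≤ ∫ s in (0:ℝ)..u, (g s + L * h s) := by
      refine intervalIntegral.integral_mono_on hu.1 (hfInt u hu)
        ((hgInt u hu).add ((hInt u hu).const_mul L)) ?_
      intro s hs
      calc ‖μd (X s) - a s‖ = ‖(μd (X s) - μd (Y s)) + (μd (Y s) - a s)‖ := by abel_nf
        _ ≤ ‖μd (X s) - μd (Y s)‖ + ‖μd (Y s) - a s‖ := norm_add_le _ _
        _ ≤ L * h s + g s := by
            refine add_le_add (hμ _ _) ?_
            rw [hg]; simp only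
            rw [norm_sub_rev]
        _ = g s + L * h s := by ring
    refine mono.trans_eq ?_
    rw [intervalIntegral.integral_add (hgInt u hu) ((hInt u hu).const_mul L),
      intervalIntegral.integral_const_mul]
  have key := gronwall_aux L T hL h g hhc (fun s => norm_nonneg _) (fun s => norm_nonneg _)
    hInt hgInt hbnd
  -- main conclusion
  intro t ht
  rcases eq_or_lt_of_le ht.1 with h0 | h0
  · -- t = 0
    rw [← h0]
    simp only [Set.Ioc_self, Measure.restrict_empty, lintegral_zero_measure, mul_zero,
      add_zero, mul_zero, Real.exp_zero, ENNReal.ofReal_one, one_mul]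
    exact le_rfl
  · -- t > 0
    set J := ∫⁻ s in Set.Ioc (0:ℝ) t, ENNReal.ofReal (‖a s - μd (Y s)‖ ^ p) with hJ
    by_cases hJtop : J = ⊤
    · have hb : ENNReal.ofReal (δ ^ (p-1)) ≠ 0 := by
        simp only [ne_eq, ENNReal.ofReal_eq_zero, not_le]
        exact Real.rpow_pos_of_pos hδ _
      have he : ENNReal.ofReal (Real.exp ((L + (1 - 1/p)/δ) * p * t)) ≠ 0 := by
        simp only [ne_eq, ENNReal.ofReal_eq_zero, not_le]
        exact Real.exp_pos _
      rw [hJtop, ENNReal.mul_top hb, add_top, ENNReal.mul_top he]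
      exact le_top
    · -- Hölder step
      have hgmeas : AEMeasurable g (volume.restrict (Set.Ioc 0 t)) := by
        have hYm : AEMeasurable Y (volume.restrict (Set.Ioc (0:ℝ) t)) :=
          (hY.mono (fun z hz => ⟨hz.1.le, hz.2.trans ht.2⟩)).aemeasurable measurableSet_Ioc
        exact ((ha.aemeasurable.sub (hμc.measurable.comp_aemeasurable hYm)).norm)
      have hpq : p.HolderConjugate (Real.conjExponent p) := .conjExponent hp1
      set q := Real.conjExponent p with hq
      have hf : AEMeasurable (fun s => ENNReal.ofReal (g s)) (volume.restrict (Set.Ioc 0 t)) :=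
        ENNReal.measurable_ofReal.comp_aemeasurable hgmeas
      have holder := ENNReal.lintegral_mul_le_Lp_mul_Lq (volume.restrict (Set.Ioc (0:ℝ) t)) hpq hf
        aemeasurable_const (g := fun _ => (1:ℝ≥0∞))
      simp only [Pi.mul_apply, Pi.one_apply, mul_one, ENNReal.one_rpow, lintegral_one,
        Measure.restrict_apply_univ] at holder
      have hfp : ∫⁻ s in Set.Ioc (0:ℝ) t, (ENNReal.ofReal (g s)) ^ p = J := by
        rw [hJ]
        congr 1
        funext s
        rw [ENNReal.ofReal_rpow_of_nonneg (norm_nonneg _) hp0.le]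
      rw [hfp, Real.volume_Ioc, sub_zero] at holder
      have hBeq : ENNReal.ofReal (∫ s in (0:ℝ)..t, g s)
          = ∫⁻ s in Set.Ioc (0:ℝ) t, ENNReal.ofReal (g s) := by
        rw [intervalIntegral.integral_of_le h0.le]
        exact ofReal_integral_eq_lintegral_ofReal
          ((intervalIntegrable_iff_integrableOn_Ioc_of_le h0.le).1 (hgInt t ht))
          (Filter.Eventually.of_forall (fun s => norm_nonneg _))
      have hRne : J ^ (1/p) * ENNReal.ofReal t ^ (1/q) ≠ ⊤ :=
        ENNReal.mul_ne_top (ENNReal.rpow_ne_top_of_nonneg (by positivity) hJtop)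
          (ENNReal.rpow_ne_top_of_nonneg
            (one_div_nonneg.2 (le_of_lt (lt_trans one_pos hpq.symm.lt)))
            ENNReal.ofReal_ne_top)
      have hmono := ENNReal.toReal_mono hRne (hBeq ▸ holder)
      rw [ENNReal.toReal_ofReal
        (intervalIntegral.integral_nonneg h0.le (fun s _ => norm_nonneg _))] at hmono
      have hBle : (∫ s in (0:ℝ)..t, g s) ≤ t ^ (1 - 1/p) * J.toReal ^ (1/p) := by
        refine hmono.trans_eq ?_
        rw [ENNReal.toReal_mul, ← ENNReal.toReal_rpow, ← ENNReal.toReal_rpow,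
          ENNReal.toReal_ofReal h0.le]
        have h1q : 1/q = 1 - 1/p := by
          have := hpq.inv_add_inv_eq_one
          rw [one_div, one_div]
          linarith [this]
        rw [h1q, mul_comm]
      -- final combination
      have hE := key t ht
      have final := final_real_aux hL h0 hδ hp (norm_nonneg (X 0 - Y 0))
        (intervalIntegral.integral_nonneg h0.le (fun s _ => norm_nonneg _))
        ENNReal.toReal_nonneg hBle (norm_nonneg (X t - Y t)) hE
      calc ENNReal.ofReal (‖X t - Y t‖ ^ p)
          ≤ ENNReal.ofReal (Real.exp ((L + (1 - 1/p)/δ) * p * t) *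
              (‖X 0 - Y 0‖ ^ p + δ ^ (p-1) * J.toReal)) := ENNReal.ofReal_le_ofReal final
        _ = ENNReal.ofReal (Real.exp ((L + (1 - 1/p)/δ) * p * t)) *
              (ENNReal.ofReal (‖X 0 - Y 0‖ ^ p) + ENNReal.ofReal (δ ^ (p-1)) * J) := by
            rw [ENNReal.ofReal_mul (Real.exp_pos _).le,
              ENNReal.ofReal_add (Real.rpow_nonneg (norm_nonneg _) _)
                (mul_nonneg (Real.rpow_nonneg hδ.le _) ENNReal.toReal_nonneg),
              ENNReal.ofReal_mul (Real.rpow_nonneg hδ.le _),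
              ENNReal.ofReal_toReal hJtop]
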